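/- Let A ∈ M_n(ℂ), let u ∈ ℂ^n have pairwise distinct coordinates, and let i ≠ k be indices in {1,…,n}. Setting 𝒜 := −(A + I) and B_m := E_m 𝒜 for m = 1,…,n, one has the matrix identity E_k·[ω_i(u,A), 𝒜] = [B_i, B_k]/(u_i − u_k) + [ω_i(u,A), B_k]. -/

import Mathlib

/-- `ω_j(u,A)`: the matrix whose `(a,b)` entry is `A_{ab}(δ_{aj} − δ_{bj})/(u_a − u_b)`
for `a ≠ b`, and whose diagonal entries are `0`. -/
noncomputable def omegaMat {n : ℕ} (u : Fin n → ℂ) (A : Matrix (Fin n) (Fin n) ℂ)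
    (j : Fin n) : Matrix (Fin n) (Fin n) ℂ :=
  Matrix.of fun a b =>
    if a = b then 0
    else A a b * ((if a = j then (1 : ℂ) else 0) - (if b = j then (1 : ℂ) else 0)) / (u a - u b)

lemma aux_std_mul {n : ℕ} (k : Fin n) (M : Matrix (Fin n) (Fin n) ℂ) (a b : Fin n) :
    (Matrix.single k k (1 : ℂ) * M) a b = if a = k then M k b else 0 := by
  rcases eq_or_ne a k with rfl | h
  · simp [Matrix.mul_apply, Matrix.single, ite_and]
  · simp [Matrix.mul_apply, Matrix.single, ite_and, h, Ne.symm h]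

lemma aux_mul_std {n : ℕ} (k : Fin n) (M N : Matrix (Fin n) (Fin n) ℂ) (a b : Fin n) :
    (M * (Matrix.single k k (1 : ℂ) * N)) a b = M a k * N k b := by
  rw [Matrix.mul_apply]
  rw [Finset.sum_eq_single k] <;> simp (config := {contextual := true}) [aux_std_mul]

lemma aux_omega_mul {n : ℕ} (u : Fin n → ℂ) (A M : Matrix (Fin n) (Fin n) ℂ)
    (i k b : Fin n) (hik : i ≠ k) :
    (omegaMat u A i * M) k b = A k i * (-1) / (u k - u i) * M i b := by
  rw [Matrix.mul_apply, Finset.sum_eq_single i]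
  · simp [omegaMat, hik.symm, Ne.symm hik]
  · intro c _ hc
    simp [omegaMat, hc, Ne.symm hik]
  · simp

/-- with `𝒜 := −(A+I)` and `B_m := E_m 𝒜`, for `i ≠ k` one has
`E_k·[ω_i(u,A), 𝒜] = [B_i, B_k]/(u_i − u_k) + [ω_i(u,A), B_k]`. -/
theorem stmt4 {n : ℕ} (A : Matrix (Fin n) (Fin n) ℂ) (u : Fin n → ℂ)
    (hu : ∀ a b : Fin n, a ≠ b → u a ≠ u b) (i k : Fin n) (hik : i ≠ k)
    (𝒜 : Matrix (Fin n) (Fin n) ℂ) (h𝒜 : 𝒜 = -(A + 1))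
    (B : Fin n → Matrix (Fin n) (Fin n) ℂ)
    (hB : ∀ m, B m = Matrix.single m m (1 : ℂ) * 𝒜) :
    Matrix.single k k (1 : ℂ) * (omegaMat u A i * 𝒜 - 𝒜 * omegaMat u A i)
      = (u i - u k)⁻¹ • (B i * B k - B k * B i)
        + (omegaMat u A i * B k - B k * omegaMat u A i) := by

  have huik : u i - u k ≠ 0 := sub_ne_zero.mpr (hu i k hik)
  have huki : u k - u i ≠ 0 := sub_ne_zero.mpr (hu k i (Ne.symm hik))
  have hAki : 𝒜 k i = -A k i := by simp [h𝒜, Matrix.one_apply, Ne.symm hik]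
  have hAik : 𝒜 i k = -A i k := by simp [h𝒜, Matrix.one_apply, hik]
  ext a b
  rw [hB i, hB k, Matrix.mul_assoc (Matrix.single k k (1:ℂ)) 𝒜 (omegaMat u A i)]
  simp only [Matrix.add_apply, Matrix.sub_apply, Matrix.smul_apply, smul_eq_mul]
  rw [aux_std_mul, aux_std_mul, aux_mul_std, aux_mul_std, aux_mul_std]
  simp only [Matrix.sub_apply, aux_std_mul, aux_omega_mul u A 𝒜 i k b hik]
  by_cases hak : a = k
  · have hai : a ≠ i := by rw [hak]; exact Ne.symm hik
    have hω : omegaMat u A i a k = 0 := by rw [hak]; simp [omegaMat]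
    simp only [if_pos hak, if_neg hai, hω, hAki]
    field_simp
    ring
  · by_cases hai : a = i
    · have hω : omegaMat u A i a k = A i k / (u i - u k) := by
        rw [hai]; simp [omegaMat, hik, Ne.symm hik]
      simp only [if_neg hak, if_pos hai, hω, hAik]
      field_simp
      ring
    · have hω : omegaMat u A i a k = 0 := by
        simp [omegaMat, hak, hai, Ne.symm hik]
      simp [hak, hai, hω]
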